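/- Let X be a GC₄-set of 15 nodes with no 5 collinear nodes. If a line ℓ passes through exactly 2 or exactly 3 nodes of X, then at most one node of X uses ℓ (i.e., ℓ divides the fundamental polynomial of at most one node). -/

import Mathlib

open MvPolynomial

noncomputable section
open scoped Classical

/-- Bivariate real polynomials. -/
abbrev Poly2 := MvPolynomial (Fin 2) ℝ

/-- Evaluation of a bivariate polynomial at a point of the plane. -/
def evalPt (A : Fin 2 → ℝ) (p : Poly2) : ℝ := MvPolynomial.eval A p

/-- A line is (identified with) a polynomial of total degree 1. -/
def IsLine (ℓ : Poly2) : Prop := ℓ.totalDegree = 1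

/-- `X` is `n`-poised: unique interpolation from Π_n at the nodes of `X`. -/
def Poised (n : ℕ) (X : Finset (Fin 2 → ℝ)) : Prop :=
  ∀ c : (Fin 2 → ℝ) → ℝ,
    ∃! p : Poly2, p.totalDegree ≤ n ∧ ∀ A ∈ X, evalPt A p = c A

/-- `p` is an `n`-fundamental polynomial of the node `A` of `X`. -/
def IsFund (n : ℕ) (X : Finset (Fin 2 → ℝ)) (A : Fin 2 → ℝ) (p : Poly2) : Prop :=
  p.totalDegree ≤ n ∧ evalPt A p = 1 ∧ ∀ B ∈ X, B ≠ A → evalPt B p = 0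

/-- A `GC_n`-set: an `n`-poised set all of whose nodes have fundamental
polynomials that are products of `n` linear factors. -/
def GCSet (n : ℕ) (X : Finset (Fin 2 → ℝ)) : Prop :=
  Poised n X ∧
    ∀ A ∈ X, ∃ f : Fin n → Poly2, (∀ i, IsLine (f i)) ∧ IsFund n X A (∏ i, f i)

/-- The node `A` uses the line `ℓ`: `ℓ` divides a fundamental polynomial of `A`. -/
def Uses (n : ℕ) (X : Finset (Fin 2 → ℝ)) (A : Fin 2 → ℝ) (ℓ : Poly2) : Prop :=
  ∃ p, IsFund n X A p ∧ ℓ ∣ p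

/-- The nodes of `X` lying on the line `ℓ`. -/
def nodesOn (X : Finset (Fin 2 → ℝ)) (ℓ : Poly2) : Finset (Fin 2 → ℝ) :=
  X.filter (fun A => evalPt A ℓ = 0)

/-- `X` contains no 5 collinear nodes. -/
def NoFiveCollinear (X : Finset (Fin 2 → ℝ)) : Prop :=
  ∀ ℓ : Poly2, IsLine ℓ → (nodesOn X ℓ).card ≤ 4

lemma lineRep (f : Poly2) (h : f.totalDegree ≤ 1) :
    ∃ a b c : ℝ, f = C a + C b * X 0 + C c * X 1 := by
  refine ⟨coeff 0 f, coeff (Finsupp.single 0 1) f, coeff (Finsupp.single 1 1) f, ?_⟩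
  apply MvPolynomial.ext
  intro m
  have hm : (∑ i ∈ m.support, m i) = m 0 + m 1 := by
    have : m.sum (fun _ e => e) = m 0 + m 1 := by
      rw [Finsupp.sum_fintype _ _ (fun _ => rfl)]
      exact Fin.sum_univ_two m
    exact this
  rw [coeff_add, coeff_add, coeff_C, coeff_C_mul, coeff_C_mul, coeff_X', coeff_X']
  by_cases h2 : 2 ≤ m 0 + m 1
  · have hz : coeff m f = 0 := coeff_eq_zero_of_totalDegree_lt (by omega)
    have h0 : ¬ ((0 : Fin 2 →₀ ℕ) = m) := by
      intro h; rw [← h] at h2; simp at h2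
    have hs0 : ¬ (Finsupp.single (0 : Fin 2) 1 = m) := by
      intro h; rw [← h] at h2; simp [Finsupp.single_apply] at h2
    have hs1 : ¬ (Finsupp.single (1 : Fin 2) 1 = m) := by
      intro h; rw [← h] at h2; simp [Finsupp.single_apply] at h2
    simp [hz, if_neg h0, if_neg hs0, if_neg hs1]
  · have hfin : ∀ i : Fin 2, i = 0 ∨ i = 1 := by decide
    have hcase : (m 0 = 0 ∧ m 1 = 0) ∨ (m 0 = 1 ∧ m 1 = 0) ∨ (m 0 = 0 ∧ m 1 = 1) := by omega
    rcases hcase with ⟨ha, hb⟩ | ⟨ha, hb⟩ | ⟨ha, hb⟩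
    · have hm0 : m = 0 := Finsupp.ext fun i => by rcases hfin i with rfl | rfl <;> simpa
      subst hm0
      have hs0 : ¬ (Finsupp.single (0:Fin 2) 1 = 0) := by simp
      have hs1 : ¬ (Finsupp.single (1:Fin 2) 1 = 0) := by simp
      simp [hs0, hs1]
    · have hm0 : m = Finsupp.single 0 1 := Finsupp.ext fun i => by
        rcases hfin i with rfl | rfl <;> simp [Finsupp.single_apply, ha, hb]
      subst hm0
      have h0 : ¬ ((0 : Fin 2 →₀ ℕ) = Finsupp.single (0:Fin 2) 1) := by
        intro h; have := (Finsupp.ext_iff.mp h) 0; simp [Finsupp.single_apply] at this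
      have hs1 : ¬ (Finsupp.single (1:Fin 2) 1 = Finsupp.single (0:Fin 2) 1) := by
        intro h; have := (Finsupp.ext_iff.mp h) 0; simp [Finsupp.single_apply] at this
      simp [h0, hs1]
    · have hm0 : m = Finsupp.single 1 1 := Finsupp.ext fun i => by
        rcases hfin i with rfl | rfl <;> simp [Finsupp.single_apply, ha, hb]
      subst hm0
      have h0 : ¬ ((0 : Fin 2 →₀ ℕ) = Finsupp.single (1:Fin 2) 1) := by
        intro h; have := (Finsupp.ext_iff.mp h) 1; simp [Finsupp.single_apply] at this
      have hs0 : ¬ (Finsupp.single (0:Fin 2) 1 = Finsupp.single (1:Fin 2) 1) := by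
        intro h; have := (Finsupp.ext_iff.mp h) 0; simp [Finsupp.single_apply] at this
      simp [h0, hs0]

lemma evalForm (a b c : ℝ) (v : Fin 2 → ℝ) :
    evalPt v (C a + C b * X 0 + C c * X 1) = a + b * v 0 + c * v 1 := by
  simp [evalPt]

lemma line_coeff {f : Poly2} (hf : IsLine f) :
    ∃ a b c : ℝ, f = C a + C b * X 0 + C c * X 1 ∧ (b ≠ 0 ∨ c ≠ 0) := by
  obtain ⟨a, b, c, hrep⟩ := lineRep f hf.le
  refine ⟨a, b, c, hrep, ?_⟩
  by_contra h
  push_neg at h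
  obtain ⟨hb, hc⟩ := h
  rw [hb, hc] at hrep
  simp at hrep
  rw [IsLine, hrep, totalDegree_C] at hf
  exact zero_ne_one hf

lemma line_two_zeros {f : Poly2} (hf : IsLine f) :
    ∃ P Q : Fin 2 → ℝ, P ≠ Q ∧ evalPt P f = 0 ∧ evalPt Q f = 0 := by
  obtain ⟨a, b, c, rfl, hbc⟩ := line_coeff hf
  rcases hbc with hb | hc
  · refine ⟨![-a/b, 0], ![-(a+c)/b, 1], ?_, ?_, ?_⟩
    · intro h
      have := congrFun h 1
      simp at this
    · rw [evalForm]; simp; field_simp; try ring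
    · rw [evalForm]; simp; field_simp; try ring
  · refine ⟨![0, -a/c], ![1, -(a+b)/c], ?_, ?_, ?_⟩
    · intro h
      have := congrFun h 0
      simp at this
    · rw [evalForm]; simp; field_simp; try ring
    · rw [evalForm]; simp; field_simp; try ring

lemma line_prop {f g : Poly2} (hf : IsLine f) (hg : IsLine g) {P Q : Fin 2 → ℝ}
    (hPQ : P ≠ Q) (hfP : evalPt P f = 0) (hfQ : evalPt Q f = 0)
    (hgP : evalPt P g = 0) (hgQ : evalPt Q g = 0) :
    ∃ lam : ℝ, lam ≠ 0 ∧ ∀ R, evalPt R g = lam * evalPt R f := by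
  obtain ⟨a, b, c, rfl, hbc⟩ := line_coeff hf
  obtain ⟨a', b', c', rfl, hbc'⟩ := line_coeff hg
  rw [evalForm] at hfP hfQ hgP hgQ
  have hv : P 0 ≠ Q 0 ∨ P 1 ≠ Q 1 := by
    by_contra h
    push_neg at h
    refine hPQ (funext fun i => ?_)
    have : i = 0 ∨ i = 1 := by omega
    rcases this with rfl | rfl
    · exact h.1
    · exact h.2
  have hdet : b * c' - b' * c = 0 := by
    rcases hv with h0 | h1
    · have hv0 : P 0 - Q 0 ≠ 0 := sub_ne_zero.mpr h0
      have : (b * c' - b' * c) * (P 0 - Q 0) = 0 := by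
        linear_combination c' * hfP - c' * hfQ - c * hgP + c * hgQ
      rcases mul_eq_zero.mp this with h | h
      · exact h
      · exact absurd h hv0
    · have hv1 : P 1 - Q 1 ≠ 0 := sub_ne_zero.mpr h1
      have : (b * c' - b' * c) * (P 1 - Q 1) = 0 := by
        linear_combination b' * hfQ - b' * hfP + b * hgP - b * hgQ
      rcases mul_eq_zero.mp this with h | h
      · exact h
      · exact absurd h hv1
  suffices h : ∃ lam : ℝ, lam ≠ 0 ∧ a' = lam * a ∧ b' = lam * b ∧ c' = lam * c by
    obtain ⟨lam, h0, ha, hb, hc⟩ := h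
    exact ⟨lam, h0, fun R => by rw [evalForm, evalForm, ha, hb, hc]; ring⟩
  rcases hbc with hb | hc
  · have hb' : b' ≠ 0 := by
      intro h
      rcases hbc' with h' | h'
      · exact h' h
      · rw [h] at hdet
        apply h'
        have : b * c' = 0 := by linarith
        rcases mul_eq_zero.mp this with h'' | h''
        · exact absurd h'' hb
        · exact h''
    refine ⟨b'/b, div_ne_zero hb' hb, ?_, ?_, ?_⟩
    · field_simp
      linear_combination b * hgP - b' * hfP - P 1 * hdet
    · field_simp
    · field_simp
      linear_combination hdet
  · have hc' : c' ≠ 0 := by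
      intro h
      rcases hbc' with h' | h'
      · rw [h] at hdet
        apply h'
        have : b' * c = 0 := by linarith
        rcases mul_eq_zero.mp this with h'' | h''
        · exact h''
        · exact absurd h'' hc
      · exact h' h
    refine ⟨c'/c, div_ne_zero hc' hc, ?_, ?_, ?_⟩
    · field_simp
      linear_combination c * hgP - c' * hfP + P 0 * hdet
    · field_simp
      linear_combination -hdet
    · field_simp

lemma dvd_line {l f : Poly2} (hl : IsLine l) (hf : IsLine f) (hd : l ∣ f) :
    ∀ R, evalPt R l ≠ 0 → evalPt R f ≠ 0 := by
  obtain ⟨P, Q, hPQ, hP, hQ⟩ := line_two_zeros hl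
  obtain ⟨t, rfl⟩ := hd
  have hfP : evalPt P (l * t) = 0 := by simp [evalPt, show eval P l = 0 from hP]
  have hfQ : evalPt Q (l * t) = 0 := by simp [evalPt, show eval Q l = 0 from hQ]
  obtain ⟨lam, hlam, hrel⟩ := line_prop hl hf hPQ hP hQ hfP hfQ
  intro R hR
  rw [hrel R]
  exact mul_ne_zero hlam hR

lemma prime_line_aux (a b c : ℝ) (hb : b ≠ 0) :
    Prime (C a + C b * X 0 + C c * X 1 : Poly2) := by
  have hC : ∀ r : ℝ, (finSuccEquiv ℝ 1) (C r : Poly2) = Polynomial.C (C r) := by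
    intro r
    simp [finSuccEquiv_apply]
  have h1 : (X 1 : Poly2) = X (Fin.succ 0) := rfl
  have key : (finSuccEquiv ℝ 1) (C a + C b * X 0 + C c * X 1 : Poly2)
      = Polynomial.C (C b) *
        (Polynomial.X - Polynomial.C (C (-a/b) + C (-c/b) * X 0)) := by
    have h2 : (C b * (C (-a/b) + C (-c/b) * X 0) : MvPolynomial (Fin 1) ℝ)
        = -(C a + C c * X 0) := by
      rw [mul_add, ← C_mul, ← mul_assoc, ← C_mul,
        show b * (-a/b) = -a from by field_simp; try ring,
        show b * (-c/b) = -c from by field_simp; try ring, C_neg, C_neg]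
      ring
    rw [map_add, map_add, map_mul, map_mul, finSuccEquiv_X_zero, h1, finSuccEquiv_X_succ,
      hC, hC, hC, ← Polynomial.C_mul, mul_sub, ← Polynomial.C_mul, h2,
      Polynomial.C_neg, sub_neg_eq_add, Polynomial.C_add]
    ring
  have hu : IsUnit (Polynomial.C (C b : MvPolynomial (Fin 1) ℝ)) :=
    Polynomial.isUnit_C.mpr ((isUnit_iff_ne_zero.mpr hb).map (C : ℝ →+* MvPolynomial (Fin 1) ℝ))
  have hp2 : Prime ((finSuccEquiv ℝ 1) (C a + C b * X 0 + C c * X 1 : Poly2)) := by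
    rw [key]
    exact ((associated_unit_mul_left _ _ hu).symm).prime (Polynomial.prime_X_sub_C _)
  exact (MulEquiv.prime_iff (finSuccEquiv ℝ 1).toMulEquiv).mp hp2

lemma prime_line {f : Poly2} (hf : IsLine f) : Prime f := by
  obtain ⟨a, b, c, rfl, hbc⟩ := line_coeff hf
  rcases hbc with hb | hc
  · exact prime_line_aux a b c hb
  · have h := prime_line_aux a c b hc
    set e := renameEquiv ℝ (Equiv.swap (0 : Fin 2) 1) with he_def
    have he : e (C a + C c * X 0 + C b * X 1) = C a + C b * X 0 + C c * X 1 := by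
      simp [he_def, map_add, map_mul, rename_C, rename_X, Equiv.swap_apply_left,
        Equiv.swap_apply_right]
      ring
    have h2 := (MulEquiv.prime_iff e.toMulEquiv).mpr h
    rw [show e.toMulEquiv (C a + C c * X 0 + C b * X 1) = e (C a + C c * X 0 + C b * X 1) from rfl,
      he] at h2
    exact h2

lemma fund_unique {n : ℕ} {X : Finset (Fin 2 → ℝ)} {A : Fin 2 → ℝ} {p q : Poly2}
    (hP : Poised n X) (hp : IsFund n X A p) (hq : IsFund n X A q) : p = q := by
  obtain ⟨r, -, hr⟩ := hP (fun B => if B = A then 1 else 0)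
  have key : ∀ s : Poly2, IsFund n X A s →
      (s.totalDegree ≤ n ∧ ∀ B ∈ X, evalPt B s = (fun B => if B = A then 1 else 0) B) := by
    intro s hs
    refine ⟨hs.1, fun B hB => ?_⟩
    by_cases h : B = A
    · subst h; simp [hs.2.1]
    · simp [h, hs.2.2 B hB h]
  rw [hr p (key p hp), hr q (key q hq)]

lemma match_step (Z : Finset (Fin 2 → ℝ)) (SA SB : Finset (Fin 4)) (F G : Fin 4 → Poly2)
    (hF : ∀ i, IsLine (F i)) (hG : ∀ j, IsLine (G j))
    (covF : ∀ P ∈ Z, ∃ i ∈ SA, evalPt P (F i) = 0)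
    (covG : ∀ P ∈ Z, ∃ j ∈ SB, evalPt P (G j) = 0)
    (hcard : SA.card * SB.card < Z.card) :
    ∃ i ∈ SA, ∃ j ∈ SB, ∃ lam : ℝ, lam ≠ 0 ∧
      ∀ R, evalPt R (G j) = lam * evalPt R (F i) := by
  classical
  set φ : (Fin 2 → ℝ) → Fin 4 × Fin 4 := fun P =>
    if h : (∃ i ∈ SA, evalPt P (F i) = 0) ∧ (∃ j ∈ SB, evalPt P (G j) = 0)
    then (h.1.choose, h.2.choose) else (0, 0) with hφ
  have hmaps : ∀ P ∈ Z, φ P ∈ SA ×ˢ SB := by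
    intro P hP
    have h : (∃ i ∈ SA, evalPt P (F i) = 0) ∧ (∃ j ∈ SB, evalPt P (G j) = 0) :=
      ⟨covF P hP, covG P hP⟩
    rw [hφ]
    simp only [dif_pos h]
    exact Finset.mem_product.mpr ⟨h.1.choose_spec.1, h.2.choose_spec.1⟩
  have hlt : (SA ×ˢ SB).card < Z.card := by rw [Finset.card_product]; exact hcard
  obtain ⟨P, hP, Q, hQ, hne, heq⟩ := Finset.exists_ne_map_eq_of_card_lt_of_maps_to hlt hmaps
  have hhP : (∃ i ∈ SA, evalPt P (F i) = 0) ∧ (∃ j ∈ SB, evalPt P (G j) = 0) :=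
    ⟨covF P hP, covG P hP⟩
  have hhQ : (∃ i ∈ SA, evalPt Q (F i) = 0) ∧ (∃ j ∈ SB, evalPt Q (G j) = 0) :=
    ⟨covF Q hQ, covG Q hQ⟩
  rw [hφ] at heq
  simp only [dif_pos hhP, dif_pos hhQ, Prod.mk.injEq] at heq
  obtain ⟨h1, h2⟩ := heq
  refine ⟨hhP.1.choose, hhP.1.choose_spec.1, hhP.2.choose, hhP.2.choose_spec.1, ?_⟩
  have hFP : evalPt P (F hhP.1.choose) = 0 := hhP.1.choose_spec.2
  have hFQ : evalPt Q (F hhP.1.choose) = 0 := by rw [h1]; exact hhQ.1.choose_spec.2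
  have hGP : evalPt P (G hhP.2.choose) = 0 := hhP.2.choose_spec.2
  have hGQ : evalPt Q (G hhP.2.choose) = 0 := by rw [h2]; exact hhQ.2.choose_spec.2
  exact line_prop (hF _) (hG _) hne hFP hFQ hGP hGQ

/-- In a `GC₄`-set of 15 nodes with no 5 collinear nodes, a 2-node or 3-node
line is used by at most one node. -/
theorem stmt5 (X : Finset (Fin 2 → ℝ)) (hGC : GCSet 4 X) (hcard : X.card = 15)
    (h5 : NoFiveCollinear X)
    (ℓ : Poly2) (hℓ : IsLine ℓ) (hk : (nodesOn X ℓ).card = 2 ∨ (nodesOn X ℓ).card = 3)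
    (A B : Fin 2 → ℝ) (hA : A ∈ X) (hB : B ∈ X)
    (hUA : Uses 4 X A ℓ) (hUB : Uses 4 X B ℓ) :
    A = B := by
  by_contra hAB
  obtain ⟨hPoised, hGCf⟩ := hGC
  obtain ⟨fA, hfAl, hfAf⟩ := hGCf A hA
  obtain ⟨fB, hfBl, hfBf⟩ := hGCf B hB
  obtain ⟨pA, hpAf, hpAd⟩ := hUA
  obtain ⟨pB, hpBf, hpBd⟩ := hUB
  rw [fund_unique hPoised hpAf hfAf] at hpAd
  rw [fund_unique hPoised hpBf hfBf] at hpBd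
  have hlprime := prime_line hℓ
  obtain ⟨iA, -, hiA⟩ := hlprime.exists_mem_finset_dvd hpAd
  obtain ⟨iB, -, hiB⟩ := hlprime.exists_mem_finset_dvd hpBd
  have prodA : ∀ P, evalPt P (∏ i, fA i) = ∏ i, evalPt P (fA i) := fun P => by
    simp [evalPt]
  have prodB : ∀ P, evalPt P (∏ i, fB i) = ∏ i, evalPt P (fB i) := fun P => by
    simp [evalPt]
  have hA1 : ∀ i, evalPt A (fA i) ≠ 0 := by
    intro i h
    have h1 := hfAf.2.1
    rw [prodA] at h1
    have h0 : (∏ i, evalPt A (fA i)) = 0 := Finset.prod_eq_zero (Finset.mem_univ i) h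
    rw [h0] at h1
    exact zero_ne_one h1
  have hB1 : ∀ i, evalPt B (fB i) ≠ 0 := by
    intro i h
    have h1 := hfBf.2.1
    rw [prodB] at h1
    have h0 : (∏ i, evalPt B (fB i)) = 0 := Finset.prod_eq_zero (Finset.mem_univ i) h
    rw [h0] at h1
    exact zero_ne_one h1
  have hlA : evalPt A ℓ ≠ 0 := by
    obtain ⟨t, ht⟩ := hiA
    intro h
    exact hA1 iA (by rw [ht]; simp [evalPt, show eval A ℓ = 0 from h])
  have hlB : evalPt B ℓ ≠ 0 := by
    obtain ⟨t, ht⟩ := hiB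
    intro h
    exact hB1 iB (by rw [ht]; simp [evalPt, show eval B ℓ = 0 from h])
  -- the set Z of nodes off ℓ and different from A, B
  have hNX : nodesOn X ℓ ⊆ X := Finset.filter_subset _ _
  have hAN : A ∉ nodesOn X ℓ := by simp [nodesOn, hlA]
  have hBN : B ∉ nodesOn X ℓ := by simp [nodesOn, hlB]
  set Z0 : Finset (Fin 2 → ℝ) := (X \ nodesOn X ℓ) \ {A, B} with hZ0
  have hZ0X : Z0 ⊆ X := (Finset.sdiff_subset).trans Finset.sdiff_subset
  have cardZ0 : 10 ≤ Z0.card := by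
    have h1 : ({A, B} : Finset (Fin 2 → ℝ)) ⊆ X \ nodesOn X ℓ := by
      intro P hP
      rcases Finset.mem_insert.mp hP with rfl | hP2
      · exact Finset.mem_sdiff.mpr ⟨hA, hAN⟩
      · rw [Finset.mem_singleton.mp hP2]
        exact Finset.mem_sdiff.mpr ⟨hB, hBN⟩
    rw [hZ0, Finset.card_sdiff_of_subset h1, Finset.card_sdiff_of_subset hNX, hcard,
      Finset.card_pair hAB]
    rcases hk with h | h <;> rw [h] <;> norm_num
  have hZmem : ∀ P ∈ Z0, P ∈ X ∧ P ≠ A ∧ P ≠ B ∧ evalPt P ℓ ≠ 0 := by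
    intro P hP
    rw [hZ0, Finset.mem_sdiff, Finset.mem_sdiff] at hP
    obtain ⟨⟨hPX, hPN⟩, hPAB⟩ := hP
    have hPl : evalPt P ℓ ≠ 0 := by
      intro h
      exact hPN (Finset.mem_filter.mpr ⟨hPX, h⟩)
    have hPA : P ≠ A := by rintro rfl; exact hPAB (by simp)
    have hPB : P ≠ B := by rintro rfl; exact hPAB (by simp)
    exact ⟨hPX, hPA, hPB, hPl⟩
  have covA : ∀ P ∈ Z0, ∃ i, i ≠ iA ∧ evalPt P (fA i) = 0 := by
    intro P hP
    obtain ⟨hPX, hPA, hPB, hPl⟩ := hZmem P hP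
    have h0 : evalPt P (∏ i, fA i) = 0 := hfAf.2.2 P hPX hPA
    rw [prodA] at h0
    obtain ⟨i, -, hi⟩ := Finset.prod_eq_zero_iff.mp h0
    refine ⟨i, ?_, hi⟩
    rintro rfl
    exact dvd_line hℓ (hfAl i) hiA P hPl hi
  have covB : ∀ P ∈ Z0, ∃ j, j ≠ iB ∧ evalPt P (fB j) = 0 := by
    intro P hP
    obtain ⟨hPX, hPA, hPB, hPl⟩ := hZmem P hP
    have h0 : evalPt P (∏ i, fB i) = 0 := hfBf.2.2 P hPX hPB
    rw [prodB] at h0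
    obtain ⟨j, -, hj⟩ := Finset.prod_eq_zero_iff.mp h0
    refine ⟨j, ?_, hj⟩
    rintro rfl
    exact dvd_line hℓ (hfBl j) hiB P hPl hj
  -- capacity: any line contains at most 4 points of a subset of X
  have cap : ∀ (W : Finset (Fin 2 → ℝ)) (m : Poly2), W ⊆ X → IsLine m →
      (W.filter (fun P => evalPt P m = 0)).card ≤ 4 := by
    intro W m hW hm
    refine le_trans (Finset.card_le_card ?_) (h5 m hm)
    intro P hP
    rw [Finset.mem_filter] at hP
    exact Finset.mem_filter.mpr ⟨hW hP.1, hP.2⟩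
  -- Step 1
  obtain ⟨i1, hi1m, j1, hj1m, lam1, hlam1, R1⟩ :=
    match_step Z0 {iA}ᶜ {iB}ᶜ fA fB hfAl hfBl
      (fun P hP => by
        obtain ⟨i, hi1, hi2⟩ := covA P hP
        exact ⟨i, by simpa using hi1, hi2⟩)
      (fun P hP => by
        obtain ⟨j, hj1, hj2⟩ := covB P hP
        exact ⟨j, by simpa using hj1, hj2⟩)
      (by
        have h1 : ({iA}ᶜ : Finset (Fin 4)).card = 3 := by
          rw [Finset.card_compl]; simp
        have h2 : ({iB}ᶜ : Finset (Fin 4)).card = 3 := by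
          rw [Finset.card_compl]; simp
        rw [h1, h2]; omega)
  have hi1 : i1 ≠ iA := by simpa using hi1m
  have hj1 : j1 ≠ iB := by simpa using hj1m
  set Z1 := Z0.filter (fun P => ¬ (evalPt P (fA i1) = 0)) with hZ1
  have hZ1X : Z1 ⊆ X := (Finset.filter_subset _ _).trans hZ0X
  have cardZ1 : 6 ≤ Z1.card := by
    have hsplit := Finset.card_filter_add_card_filter_not
      (s := Z0) (p := fun P => evalPt P (fA i1) = 0)
    have hcap := cap Z0 (fA i1) hZ0X (hfAl i1)
    rw [hZ1]
    omega
  have covA1 : ∀ P ∈ Z1, ∃ i ∈ ({iA, i1}ᶜ : Finset (Fin 4)), evalPt P (fA i) = 0 := by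
    intro P hP
    rw [hZ1, Finset.mem_filter] at hP
    obtain ⟨i, hia, hi0⟩ := covA P hP.1
    refine ⟨i, ?_, hi0⟩
    simp only [Finset.mem_compl, Finset.mem_insert, Finset.mem_singleton, not_or]
    exact ⟨hia, fun h => hP.2 (h ▸ hi0)⟩
  have covB1 : ∀ P ∈ Z1, ∃ j ∈ ({iB, j1}ᶜ : Finset (Fin 4)), evalPt P (fB j) = 0 := by
    intro P hP
    rw [hZ1, Finset.mem_filter] at hP
    obtain ⟨j, hjb, hj0⟩ := covB P hP.1
    refine ⟨j, ?_, hj0⟩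
    simp only [Finset.mem_compl, Finset.mem_insert, Finset.mem_singleton, not_or]
    refine ⟨hjb, fun h => hP.2 ?_⟩
    subst h
    have := R1 P
    rw [hj0] at this
    exact (mul_eq_zero.mp this.symm).resolve_left hlam1
  -- Step 2
  obtain ⟨i2, hi2m, j2, hj2m, lam2, hlam2, R2⟩ :=
    match_step Z1 {iA, i1}ᶜ {iB, j1}ᶜ fA fB hfAl hfBl covA1 covB1
      (by
        have h1 : ({iA, i1}ᶜ : Finset (Fin 4)).card = 2 := by
          rw [Finset.card_compl, Finset.card_insert_of_notMem (by simpa using hi1.symm)]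
          simp
        have h2 : ({iB, j1}ᶜ : Finset (Fin 4)).card = 2 := by
          rw [Finset.card_compl, Finset.card_insert_of_notMem (by simpa using hj1.symm)]
          simp
        rw [h1, h2]; omega)
  have hi2 : i2 ≠ iA ∧ i2 ≠ i1 := by simpa [not_or] using hi2m
  have hj2 : j2 ≠ iB ∧ j2 ≠ j1 := by simpa [not_or] using hj2m
  set Z2 := Z1.filter (fun P => ¬ (evalPt P (fA i2) = 0)) with hZ2
  have cardZ2 : 2 ≤ Z2.card := by
    have hsplit := Finset.card_filter_add_card_filter_not
      (s := Z1) (p := fun P => evalPt P (fA i2) = 0)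
    have hcap := cap Z1 (fA i2) hZ1X (hfAl i2)
    rw [hZ2]
    omega
  have covA2 : ∀ P ∈ Z2, ∃ i ∈ ({iA, i1, i2}ᶜ : Finset (Fin 4)), evalPt P (fA i) = 0 := by
    intro P hP
    rw [hZ2, Finset.mem_filter] at hP
    obtain ⟨i, him, hi0⟩ := covA1 P hP.1
    simp only [Finset.mem_compl, Finset.mem_insert, Finset.mem_singleton, not_or] at him
    refine ⟨i, ?_, hi0⟩
    simp only [Finset.mem_compl, Finset.mem_insert, Finset.mem_singleton, not_or]
    exact ⟨him.1, him.2, fun h => hP.2 (h ▸ hi0)⟩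
  have covB2 : ∀ P ∈ Z2, ∃ j ∈ ({iB, j1, j2}ᶜ : Finset (Fin 4)), evalPt P (fB j) = 0 := by
    intro P hP
    rw [hZ2, Finset.mem_filter] at hP
    obtain ⟨j, hjm, hj0⟩ := covB1 P hP.1
    simp only [Finset.mem_compl, Finset.mem_insert, Finset.mem_singleton, not_or] at hjm
    refine ⟨j, ?_, hj0⟩
    simp only [Finset.mem_compl, Finset.mem_insert, Finset.mem_singleton, not_or]
    refine ⟨hjm.1, hjm.2, fun h => hP.2 ?_⟩
    subst h
    have := R2 P
    rw [hj0] at this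
    exact (mul_eq_zero.mp this.symm).resolve_left hlam2
  -- Step 3
  obtain ⟨i3, hi3m, j3, hj3m, lam3, hlam3, R3⟩ :=
    match_step Z2 {iA, i1, i2}ᶜ {iB, j1, j2}ᶜ fA fB hfAl hfBl covA2 covB2
      (by
        have h1 : ({iA, i1, i2}ᶜ : Finset (Fin 4)).card = 1 := by
          rw [Finset.card_compl]
          rw [Finset.card_insert_of_notMem (by
            simp only [Finset.mem_insert, Finset.mem_singleton, not_or]
            exact ⟨hi1.symm, fun h => hi2.1 h.symm⟩)]
          rw [Finset.card_insert_of_notMem (by simpa using fun h => hi2.2 h.symm)]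
          simp
        have h2 : ({iB, j1, j2}ᶜ : Finset (Fin 4)).card = 1 := by
          rw [Finset.card_compl]
          rw [Finset.card_insert_of_notMem (by
            simp only [Finset.mem_insert, Finset.mem_singleton, not_or]
            exact ⟨hj1.symm, fun h => hj2.1 h.symm⟩)]
          rw [Finset.card_insert_of_notMem (by simpa using fun h => hj2.2 h.symm)]
          simp
        rw [h1, h2]; omega)
  have hj3 : j3 ≠ iB ∧ j3 ≠ j1 ∧ j3 ≠ j2 := by simpa [not_or] using hj3m
  have hi3 : i3 ≠ iA ∧ i3 ≠ i1 ∧ i3 ≠ i2 := by simpa [not_or] using hi3m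
  -- final contradiction: every factor of B's fundamental polynomial is nonzero at A
  have hAfB : ∀ j, evalPt A (fB j) ≠ 0 := by
    intro j
    have hcases : j = iB ∨ j = j1 ∨ j = j2 ∨ j = j3 := by
      by_contra hcon
      push_neg at hcon
      obtain ⟨h1, h2, h3, h4⟩ := hcon
      have e1 : (j : Fin 4).val ≠ iB.val := fun h => h1 (Fin.ext h)
      have e2 : (j : Fin 4).val ≠ j1.val := fun h => h2 (Fin.ext h)
      have e3 : (j : Fin 4).val ≠ j2.val := fun h => h3 (Fin.ext h)
      have e4 : (j : Fin 4).val ≠ j3.val := fun h => h4 (Fin.ext h)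
      have f1 : j1.val ≠ iB.val := fun h => hj1 (Fin.ext h)
      have f2 : j2.val ≠ iB.val := fun h => hj2.1 (Fin.ext h)
      have f3 : j2.val ≠ j1.val := fun h => hj2.2 (Fin.ext h)
      have f4 : j3.val ≠ iB.val := fun h => hj3.1 (Fin.ext h)
      have f5 : j3.val ≠ j1.val := fun h => hj3.2.1 (Fin.ext h)
      have f6 : j3.val ≠ j2.val := fun h => hj3.2.2 (Fin.ext h)
      have g0 := j.isLt
      have g1 := iB.isLt
      have g2 := j1.isLt
      have g3 := j2.isLt
      have g4 := j3.isLt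
      omega
    rcases hcases with rfl | rfl | rfl | rfl
    · exact dvd_line hℓ (hfBl j) hiB A hlA
    · rw [R1 A]; exact mul_ne_zero hlam1 (hA1 i1)
    · rw [R2 A]; exact mul_ne_zero hlam2 (hA1 i2)
    · rw [R3 A]; exact mul_ne_zero hlam3 (hA1 i3)
  have hzero : evalPt A (∏ i, fB i) = 0 := hfBf.2.2 A hA hAB
  rw [prodB] at hzero
  exact (Finset.prod_ne_zero_iff.mpr (fun j _ => hAfB j)) hzero
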